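/- Let $\bm X = (X_1,\dots,X_r)$ have marginals with rank maps $R_{\mu_i}$ and let $(X_1',\dots,X_r')$ be an independent copy of $\bm X$. Define $W_i(x,x') = \mathbb{E}\|x - R_{\mu_i}(X_i')\| + \mathbb{E}\|R_{\mu_i}(X_i) - x'\| - \|x - x'\| - \mathbb{E}\|R_{\mu_i}(X_i) - R_{\mu_i}(X_i')\|$. If the variables $X_1,\dots,X_r$ are mutually independent, then $\mathbb{E}\left[\prod_{i=1}^r (W_i(R_{\mu_i}(X_i), R_{\mu_i}(X_i')) + c)\right] = c^r$ for every $c \ge 0$. -/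

import Mathlib

open MeasureTheory ProbabilityTheory

lemma aux_integral_pi_prod {ι : Type*} [Fintype ι] {α : ι → Type*}
    [∀ i, MeasurableSpace (α i)] (μ : ∀ i, Measure (α i)) [h : ∀ i, SigmaFinite (μ i)]
    (f : ∀ i, α i → ℝ) :
    ∫ x : ∀ i, α i, ∏ i, f i (x i) ∂(Measure.pi μ) = ∏ i, ∫ x, f i x ∂(μ i) := by
  letI : ∀ i, MeasureSpace (α i) := fun i => ⟨μ i⟩
  haveI : ∀ i, SigmaFinite (volume : Measure (α i)) := h
  exact MeasureTheory.integral_fintype_prod_eq_prod f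

lemma aux_main {ι : Type*} [Fintype ι] {α : ι → Type*} [∀ i, MeasurableSpace (α i)]
    (μ : ∀ i, Measure (α i)) [∀ i, IsProbabilityMeasure (μ i)]
    (K : ∀ i, α i × α i → ℝ) (hKm : ∀ i, Measurable (K i))
    (C : ι → ℝ) (hC0 : ∀ i, 0 ≤ C i) (hKb : ∀ i p, ‖K i p‖ ≤ C i)
    (c : ℝ) (hc : 0 ≤ c) :
    ∫ p : (∀ i, α i) × (∀ i, α i), ∏ i,
        ((∫ b, K i (p.1 i, b) ∂(μ i)) + (∫ a, K i (a, p.2 i) ∂(μ i))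
          - K i (p.1 i, p.2 i) - (∫ q, K i q ∂((μ i).prod (μ i))) + c)
        ∂((Measure.pi μ).prod (Measure.pi μ)) = c ^ (Fintype.card ι) := by
  set A := fun i (a : α i) => ∫ b, K i (a, b) ∂(μ i) with hA
  set A' := fun i (b : α i) => ∫ a, K i (a, b) ∂(μ i) with hA'
  set m := fun i => ∫ q, K i q ∂((μ i).prod (μ i)) with hm
  set φ := fun i (q : α i × α i) => A i q.1 + A' i q.2 - K i q - m i + c with hφ
  have hAm : ∀ i, Measurable (A i) :=
    fun i => (hKm i).stronglyMeasurable.integral_prod_right'.measurable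
  have hA'm : ∀ i, Measurable (A' i) := by
    intro i
    have h : Measurable (fun q : α i × α i => K i (q.2, q.1)) := (hKm i).comp measurable_swap
    exact h.stronglyMeasurable.integral_prod_right'.measurable
  have hAb : ∀ i a, ‖A i a‖ ≤ C i := by
    intro i a
    have h := norm_integral_le_of_norm_le_const (μ := μ i)
      (f := fun b => K i (a, b)) (C := C i) (Filter.Eventually.of_forall (fun b => hKb i (a, b)))
    simpa using h
  have hA'b : ∀ i b, ‖A' i b‖ ≤ C i := by
    intro i b
    have h := norm_integral_le_of_norm_le_const (μ := μ i)
      (f := fun a => K i (a, b)) (C := C i) (Filter.Eventually.of_forall (fun a => hKb i (a, b)))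
    simpa using h
  have hmb : ∀ i, ‖m i‖ ≤ C i := by
    intro i
    have h := norm_integral_le_of_norm_le_const (μ := (μ i).prod (μ i))
      (f := K i) (C := C i) (Filter.Eventually.of_forall (hKb i))
    simpa using h
  have hφm : ∀ i, Measurable (φ i) := by
    intro i
    exact ((((hAm i).comp measurable_fst).add ((hA'm i).comp measurable_snd)).sub
      (hKm i)).sub measurable_const |>.add measurable_const
  have hφb : ∀ i q, ‖φ i q‖ ≤ 4 * C i + c := by
    intro i q
    have h1 := hAb i q.1; have h2 := hA'b i q.2; have h3 := hKb i q; have h4 := hmb i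
    rw [Real.norm_eq_abs] at *
    rw [abs_le] at *
    simp only [hφ]
    constructor <;> linarith [h1.1, h1.2, h2.1, h2.2, h3.1, h3.2, h4.1, h4.2]
  have intA' : ∀ i, Integrable (A' i) (μ i) :=
    fun i => (integrable_const (C i)).mono' (hA'm i).aestronglyMeasurable
      (Filter.Eventually.of_forall (hA'b i))
  have intKa : ∀ i (a : α i), Integrable (fun b => K i (a, b)) (μ i) := by
    intro i a
    refine (integrable_const (C i)).mono' ?_ (Filter.Eventually.of_forall (fun b => hKb i (a, b)))
    exact ((hKm i).comp (measurable_const.prodMk measurable_id)).aestronglyMeasurable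
  have hm2 : ∀ i, ∫ b, A' i b ∂(μ i) = m i := by
    intro i
    have hint : Integrable (K i) ((μ i).prod (μ i)) :=
      (integrable_const (C i)).mono' (hKm i).aestronglyMeasurable
        (Filter.Eventually.of_forall (hKb i))
    exact (integral_prod_symm _ hint).symm
  have hkey : ∀ i (a : α i), ∫ b, φ i (a, b) ∂(μ i) = c := by
    intro i a
    have hsplit : (fun b => φ i (a, b)) = fun b => (A' i b - K i (a, b)) + (A i a - m i + c) := by
      funext b; simp only [hφ]; ring
    have hint1 : Integrable (fun b => A' i b - K i (a, b)) (μ i) := (intA' i).sub (intKa i a)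
    rw [hsplit, integral_add hint1 (integrable_const _),
      integral_sub (intA' i) (intKa i a), integral_const, hm2 i]
    have hAK : ∫ b, K i (a, b) ∂(μ i) = A i a := rfl
    rw [hAK]
    simp only [measure_univ, ENNReal.toReal_one, probReal_univ, smul_eq_mul, one_mul, one_smul]
    ring
  -- rewrite integrand as product of φ
  have hre : ∀ p : (∀ i, α i) × (∀ i, α i),
      (∏ i, ((∫ b, K i (p.1 i, b) ∂(μ i)) + (∫ a, K i (a, p.2 i) ∂(μ i))
          - K i (p.1 i, p.2 i) - (∫ q, K i q ∂((μ i).prod (μ i))) + c))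
        = ∏ i, φ i (p.1 i, p.2 i) := fun p => rfl
  simp only [hre]
  have hGm : Measurable (fun p : (∀ i, α i) × (∀ i, α i) => ∏ i, φ i (p.1 i, p.2 i)) := by
    refine Finset.measurable_prod _ fun i _ => ?_
    exact (hφm i).comp (((measurable_pi_apply i).comp measurable_fst).prodMk
      ((measurable_pi_apply i).comp measurable_snd))
  have hGint : Integrable (fun p : (∀ i, α i) × (∀ i, α i) => ∏ i, φ i (p.1 i, p.2 i))
      ((Measure.pi μ).prod (Measure.pi μ)) := by
    refine (integrable_const (∏ i, (4 * C i + c))).mono' hGm.aestronglyMeasurable ?_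
    refine Filter.Eventually.of_forall fun p => ?_
    rw [Real.norm_eq_abs, Finset.abs_prod]
    refine Finset.prod_le_prod (fun i _ => abs_nonneg _) fun i _ => ?_
    simpa [Real.norm_eq_abs] using hφb i (p.1 i, p.2 i)
  rw [MeasureTheory.integral_prod _ hGint]
  have hinner : ∀ x : ∀ i, α i,
      (∫ y : ∀ i, α i, ∏ i, φ i (x i, y i) ∂(Measure.pi μ)) = c ^ (Fintype.card ι) := by
    intro x
    rw [aux_integral_pi_prod μ (fun i b => φ i (x i, b))]
    rw [Finset.prod_congr rfl fun i _ => hkey i (x i)]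
    simp [Finset.card_univ]
  simp only [hinner]
  simp [measure_univ]

lemma aux_map_pi {Ω : Type*} [MeasureSpace Ω] [IsProbabilityMeasure (ℙ : Measure Ω)]
    {ι : Type*} [Fintype ι] {α : ι → Type*} [∀ i, MeasurableSpace (α i)]
    (f : ∀ i, Ω → α i) (hf : ∀ i, Measurable (f i))
    (h : iIndepFun f ℙ) :
    Measure.map (fun ω => fun i => f i ω) ℙ
      = Measure.pi (fun i => Measure.map (f i) ℙ) := by
  haveI : ∀ i, IsProbabilityMeasure (Measure.map (f i) ℙ) :=
    fun i => Measure.isProbabilityMeasure_map (hf i).aemeasurable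
  refine (Measure.pi_eq (μ := fun i => Measure.map (f i) ℙ) fun s hs => ?_).symm
  rw [Measure.map_apply (measurable_pi_iff.mpr hf) (MeasurableSet.univ_pi hs)]
  have hpre : (fun ω => fun i => f i ω) ⁻¹' Set.pi Set.univ s
      = ⋂ i ∈ Finset.univ, f i ⁻¹' s i := by
    ext ω; simp [Set.mem_pi]
  rw [hpre, (iIndepFun_iff_measure_inter_preimage_eq_mul.mp h) Finset.univ (fun i _ => hs i)]
  exact Finset.prod_congr rfl fun i _ => (Measure.map_apply (hf i) (hs i)).symm

lemma aux_main2 {Ω : Type*} [MeasureSpace Ω] [IsProbabilityMeasure (ℙ : Measure Ω)]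
    {ι : Type*} [Fintype ι] {α : ι → Type*} [∀ i, MeasurableSpace (α i)]
    (X X' : ∀ i, Ω → α i)
    (hXm : ∀ i, Measurable (X i)) (hX'm : ∀ i, Measurable (X' i))
    (K : ∀ i, α i × α i → ℝ) (hKm : ∀ i, Measurable (K i))
    (C : ι → ℝ) (hC0 : ∀ i, 0 ≤ C i) (hKb : ∀ i p, ‖K i p‖ ≤ C i)
    (hcopy : Measure.map (fun ω => fun i => X' i ω) ℙ = Measure.map (fun ω => fun i => X i ω) ℙ)
    (hXX' : IndepFun (fun ω => fun i => X i ω) (fun ω => fun i => X' i ω) ℙ)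
    (hindep : iIndepFun X ℙ)
    (c : ℝ) (hc : 0 ≤ c) :
    ∫ ω, ∏ i, ((∫ ω', K i (X i ω, X' i ω')) + (∫ ω', K i (X i ω', X' i ω))
        - K i (X i ω, X' i ω) - (∫ ω', K i (X i ω', X' i ω')) + c)
      = c ^ (Fintype.card ι) := by
  set μ := fun i => Measure.map (X i) ℙ with hμ
  haveI : ∀ i, IsProbabilityMeasure (μ i) :=
    fun i => Measure.isProbabilityMeasure_map (hXm i).aemeasurable
  have hXvec : Measurable (fun ω => fun i => X i ω) := measurable_pi_iff.mpr hXm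
  have hX'vec : Measurable (fun ω => fun i => X' i ω) := measurable_pi_iff.mpr hX'm
  have hνX : Measure.map (fun ω => fun i => X i ω) ℙ = Measure.pi μ := aux_map_pi X hXm hindep
  have hνX' : Measure.map (fun ω => fun i => X' i ω) ℙ = Measure.pi μ := hcopy.trans hνX
  have hX'i : ∀ i, Measure.map (X' i) ℙ = μ i := by
    intro i
    have h1 : Measure.map (X' i) ℙ
        = Measure.map (fun x : ∀ j, α j => x i) (Measure.map (fun ω => fun j => X' j ω) ℙ) := by
      rw [Measure.map_map (measurable_pi_apply i) hX'vec]; rfl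
    have h2 : Measure.map (X i) ℙ
        = Measure.map (fun x : ∀ j, α j => x i) (Measure.map (fun ω => fun j => X j ω) ℙ) := by
      rw [Measure.map_map (measurable_pi_apply i) hXvec]; rfl
    rw [h1, hcopy, ← h2]
  have hpair : ∀ i, Measure.map (fun ω => (X i ω, X' i ω)) ℙ = (μ i).prod (μ i) := by
    intro i
    have hi : IndepFun (X i) (X' i) ℙ :=
      hXX'.comp (measurable_pi_apply i) (measurable_pi_apply i)
    rw [(indepFun_iff_map_prod_eq_prod_map_map (hXm i).aemeasurable
        (hX'm i).aemeasurable).mp hi, hX'i i]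
  -- translate the three kinds of integrals
  have hAeq : ∀ i a, (∫ ω', K i (a, X' i ω')) = ∫ b, K i (a, b) ∂(μ i) := by
    intro i a
    rw [← hX'i i, integral_map (hX'm i).aemeasurable]
    exact ((hKm i).comp (measurable_const.prodMk measurable_id)).aestronglyMeasurable
  have hA'eq : ∀ i b, (∫ ω', K i (X i ω', b)) = ∫ a, K i (a, b) ∂(μ i) := by
    intro i b
    rw [hμ]
    simp only
    rw [integral_map (hXm i).aemeasurable]
    exact ((hKm i).comp (measurable_id.prodMk measurable_const)).aestronglyMeasurable
  have hmeq : ∀ i, (∫ ω', K i (X i ω', X' i ω')) = ∫ q, K i q ∂((μ i).prod (μ i)) := by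
    intro i
    rw [← hpair i, integral_map ((hXm i).prodMk (hX'm i)).aemeasurable]
    rw [hpair i]; exact (hKm i).aestronglyMeasurable
  -- measurable inner integrals
  have hAm : ∀ i, Measurable (fun a : α i => ∫ b, K i (a, b) ∂(μ i)) :=
    fun i => (hKm i).stronglyMeasurable.integral_prod_right'.measurable
  have hA'm : ∀ i, Measurable (fun b : α i => ∫ a, K i (a, b) ∂(μ i)) := by
    intro i
    have h : Measurable (fun q : α i × α i => K i (q.2, q.1)) := (hKm i).comp measurable_swap
    exact h.stronglyMeasurable.integral_prod_right'.measurable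
  set F := fun p : (∀ i, α i) × (∀ i, α i) => ∏ i,
      ((∫ b, K i (p.1 i, b) ∂(μ i)) + (∫ a, K i (a, p.2 i) ∂(μ i))
        - K i (p.1 i, p.2 i) - (∫ q, K i q ∂((μ i).prod (μ i))) + c) with hF
  have hFm : Measurable F := by
    refine Finset.measurable_prod _ fun i _ => ?_
    have hfst : Measurable (fun p : (∀ i, α i) × (∀ i, α i) => p.1 i) :=
      (measurable_pi_apply i).comp measurable_fst
    have hsnd : Measurable (fun p : (∀ i, α i) × (∀ i, α i) => p.2 i) :=
      (measurable_pi_apply i).comp measurable_snd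
    exact (((((hAm i).comp hfst).add ((hA'm i).comp hsnd)).sub
      ((hKm i).comp (hfst.prodMk hsnd))).sub measurable_const).add measurable_const
  have hstep : (fun ω => ∏ i, ((∫ ω', K i (X i ω, X' i ω')) + (∫ ω', K i (X i ω', X' i ω))
        - K i (X i ω, X' i ω) - (∫ ω', K i (X i ω', X' i ω')) + c))
      = fun ω => F ((fun i => X i ω), (fun i => X' i ω)) := by
    funext ω
    refine Finset.prod_congr rfl fun i _ => ?_
    rw [hAeq i (X i ω), hA'eq i (X' i ω), hmeq i]
  rw [hstep]
  have hjoint : Measure.map (fun ω => ((fun i => X i ω), (fun i => X' i ω))) ℙ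
      = (Measure.pi μ).prod (Measure.pi μ) := by
    rw [(indepFun_iff_map_prod_eq_prod_map_map hXvec.aemeasurable hX'vec.aemeasurable).mp hXX',
      hνX, hνX']
  have hpush : ∫ ω, F ((fun i => X i ω), (fun i => X' i ω))
      = ∫ p, F p ∂((Measure.pi μ).prod (Measure.pi μ)) := by
    rw [← hjoint, integral_map (hXvec.prodMk hX'vec).aemeasurable]
    rw [hjoint]; exact hFm.aestronglyMeasurable
  rw [hpush, hF]
  exact aux_main μ K hKm C hC0 hKb c hc

/-- Under mutual independence of `X_1, …, X_r`, the compact product representation of the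
rank joint distance covariance vanishes: `E[∏ᵢ (Wᵢ(R(Xᵢ), R(Xᵢ')) + c)] = c^r`. -/
theorem stmt_12 {Ω : Type*} [MeasureSpace Ω] [IsProbabilityMeasure (ℙ : Measure Ω)]
    (r : ℕ) (d : Fin r → ℕ)
    (X X' : ∀ i, Ω → EuclideanSpace ℝ (Fin (d i)))
    (hXm : ∀ i, Measurable (X i)) (hX'm : ∀ i, Measurable (X' i))
    (R : ∀ i, EuclideanSpace ℝ (Fin (d i)) → EuclideanSpace ℝ (Fin (d i)))
    (hR : ∀ i, Measurable (R i))
    (hbdd : ∀ i, ∃ M : ℝ, ∀ x, ‖R i x‖ ≤ M)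
    (hcopy : Measure.map (fun ω => fun i => X' i ω) ℙ = Measure.map (fun ω => fun i => X i ω) ℙ)
    (hXX' : IndepFun (fun ω => fun i => X i ω) (fun ω => fun i => X' i ω) ℙ)
    (hindep : iIndepFun X ℙ)
    (c : ℝ) (hc : 0 ≤ c) :
    ∫ ω, ∏ i,
        (((∫ ω', ‖R i (X i ω) - R i (X' i ω')‖)
          + (∫ ω', ‖R i (X i ω') - R i (X' i ω)‖)
          - ‖R i (X i ω) - R i (X' i ω)‖
          - ∫ ω', ‖R i (X i ω') - R i (X' i ω')‖) + c) = c ^ r := by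
  have hMex : ∀ i, ∃ M : ℝ, 0 ≤ M ∧ ∀ x, ‖R i x‖ ≤ M := by
    intro i
    obtain ⟨M, hM⟩ := hbdd i
    exact ⟨M, le_trans (norm_nonneg _) (hM 0), hM⟩
  choose M hM0 hMle using hMex
  have hKm : ∀ i, Measurable (fun q : EuclideanSpace ℝ (Fin (d i)) × EuclideanSpace ℝ (Fin (d i))
      => ‖R i q.1 - R i q.2‖) :=
    fun i => (((hR i).comp measurable_fst).sub ((hR i).comp measurable_snd)).norm
  have hKb : ∀ i (q : EuclideanSpace ℝ (Fin (d i)) × EuclideanSpace ℝ (Fin (d i))),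
      ‖‖R i q.1 - R i q.2‖‖ ≤ 2 * M i := by
    intro i q
    rw [Real.norm_eq_abs, abs_of_nonneg (norm_nonneg _)]
    calc ‖R i q.1 - R i q.2‖ ≤ ‖R i q.1‖ + ‖R i q.2‖ := norm_sub_le _ _
      _ ≤ 2 * M i := by have := hMle i q.1; have := hMle i q.2; linarith
  have h := aux_main2 X X' hXm hX'm
    (fun i q => ‖R i q.1 - R i q.2‖) hKm (fun i => 2 * M i)
    (fun i => by have := hM0 i; show (0:ℝ) ≤ 2 * M i; linarith) hKb hcopy hXX' hindep c hc
  simpa using h
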